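/- (Proportionality of plug-in scores under a correct outcome model.) For arbitrary fixed plug-in functions π̃(·) ∈ (0,1) and p̃_1(·), but with the true outcome regression μ_{10}, define ψ̃_{1,1−S}(W) = [1(Z=1)/π̃(X)]·{(1−S) − (1−p̃_1(X))} + (1−p̃_1(X)) and ψ̃_{1,Y(1−S)}(W) = [1(Z=1)/π̃(X)]·{Y(1−S) − μ_{10}(X)(1−p̃_1(X))} + μ_{10}(X)(1−p̃_1(X)). Then for all x, E[ψ̃_{1,Y(1−S)}|X=x] = μ_{10}(x)·E[ψ̃_{1,1−S}|X=x], and moreover E[ψ̃_{1,1−S}|X=x] = (π(x)/π̃(x))(p̃_1(x)−p_1(x)) + 1 − p̃_1(x). -/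

import Mathlib

open MeasureTheory Filter
open scoped Classical

noncomputable section

/-- Conditional mean of `f` given the event `A`: `E[f | A] = (∫_A f dP) / P(A)`. -/
def condMeanOn {Ω : Type*} [MeasurableSpace Ω] (P : Measure Ω) (A : Set Ω) (f : Ω → ℝ) : ℝ :=
  (∫ ω in A, f ω ∂P) / (P A).toReal

/-- Conditional probability of the event `A` given the event `B`: `P(A | B)`. -/
def condProbOn {Ω : Type*} [MeasurableSpace Ω] (P : Measure Ω) (A B : Set Ω) : ℝ :=
  (P (A ∩ B)).toReal / (P B).toReal

/-- Observed-cell outcome regression `μ_{zs}(x) = E(Y | Z = z, S = s, X = x)`. -/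
def muZS {Ω 𝓧 : Type*} [MeasurableSpace Ω] (P : Measure Ω) (X : Ω → 𝓧) (Z S Y : Ω → ℝ)
    (z s : ℝ) (x : 𝓧) : ℝ :=
  condMeanOn P {ω | Z ω = z ∧ S ω = s ∧ X ω = x} Y

/-- Propensity score `π(x) = P(Z = 1 | X = x)`. -/
def piX {Ω 𝓧 : Type*} [MeasurableSpace Ω] (P : Measure Ω) (X : Ω → 𝓧) (Z : Ω → ℝ)
    (x : 𝓧) : ℝ :=
  condProbOn P {ω | Z ω = 1} {ω | X ω = x}

/-- Principal score `p_z(x) = P(S = 1 | Z = z, X = x)`. -/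
def pZs {Ω 𝓧 : Type*} [MeasurableSpace Ω] (P : Measure Ω) (X : Ω → 𝓧) (Z S : Ω → ℝ)
    (z : ℝ) (x : 𝓧) : ℝ :=
  condProbOn P {ω | S ω = 1} {ω | Z ω = z ∧ X ω = x}

/-- Conditional principal causal effect
`τ^{(a,b)}(x) = E(Y(1) - Y(0) | S(1) = a, S(0) = b, X = x)`. -/
def tauPO {Ω 𝓧 : Type*} [MeasurableSpace Ω] (P : Measure Ω) (X : Ω → 𝓧)
    (S1 S0 Y1 Y0 : Ω → ℝ) (a b : ℝ) (x : 𝓧) : ℝ :=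
  condMeanOn P {ω | S1 ω = a ∧ S0 ω = b ∧ X ω = x} (fun ω => Y1 ω - Y0 ω)

/-- Plug-in augmented score for the arm `Z = 1`, with plug-in propensity `pit` and
plug-in conditional mean `m` of `f` given `(X, Z = 1)`. -/
def psiT1 {Ω 𝓧 : Type*} (X : Ω → 𝓧) (Z : Ω → ℝ) (pit : 𝓧 → ℝ) (f : Ω → ℝ)
    (m : 𝓧 → ℝ) : Ω → ℝ :=
  fun ω => (if Z ω = 1 then (1 : ℝ) else 0) / pit (X ω) * (f ω - m (X ω)) + m (X ω)

/-- Plug-in augmented score for the arm `Z = 0`. -/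
def psiT0 {Ω 𝓧 : Type*} (X : Ω → 𝓧) (Z : Ω → ℝ) (pit : 𝓧 → ℝ) (f : Ω → ℝ)
    (m : 𝓧 → ℝ) : Ω → ℝ :=
  fun ω => (if Z ω = 0 then (1 : ℝ) else 0) / (1 - pit (X ω)) * (f ω - m (X ω)) + m (X ω)


lemma setIntegral_psiT1 {Ω : Type*} [MeasurableSpace Ω] (P : Measure Ω) [IsFiniteMeasure P]
    {d : ℕ} (X : Ω → Fin d → ℝ) (Z : Ω → ℝ) (pit : (Fin d → ℝ) → ℝ)
    (f : Ω → ℝ) (m : (Fin d → ℝ) → ℝ) (x : Fin d → ℝ)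
    (hAm : MeasurableSet {ω | X ω = x}) (hB1m : MeasurableSet {ω | Z ω = 1})
    (hind : Integrable (fun ω => (if Z ω = 1 then (1:ℝ) else 0) * f ω)
      (P.restrict {ω | X ω = x})) :
    ∫ ω in {ω | X ω = x}, psiT1 X Z pit f m ω ∂P
      = (pit x)⁻¹ * ((∫ ω in {ω | X ω = x}, (if Z ω = 1 then (1:ℝ) else 0) * f ω ∂P)
            - m x * (P ({ω | Z ω = 1} ∩ {ω | X ω = x})).toReal)
        + m x * (P {ω | X ω = x}).toReal := by
  set A := {ω | X ω = x} with hA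
  have hindfun : (fun ω => (if Z ω = 1 then (1:ℝ) else 0))
      = Set.indicator {ω | Z ω = 1} (fun _ => 1) := by
    funext ω; simp [Set.indicator_apply, Set.mem_setOf_eq]
  have hEq : Set.EqOn (psiT1 X Z pit f m)
      (fun ω => (pit x)⁻¹ * ((if Z ω = 1 then (1:ℝ) else 0) * f ω)
        - (pit x)⁻¹ * m x * (if Z ω = 1 then (1:ℝ) else 0) + m x) A := by
    intro ω hω
    have hx : X ω = x := hω
    simp only [psiT1, hx]
    by_cases hz : Z ω = 1 <;> simp [hz] <;> ring
  rw [setIntegral_congr_fun hAm hEq]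
  have hind1 : Integrable (fun ω => (if Z ω = 1 then (1:ℝ) else 0)) (P.restrict A) := by
    rw [hindfun]
    exact ((integrable_const (1:ℝ)).indicator hB1m).restrict
  have hI1 : ∫ ω in A, (if Z ω = 1 then (1:ℝ) else 0) ∂P
      = (P ({ω | Z ω = 1} ∩ A)).toReal := by
    rw [hindfun, setIntegral_indicator hB1m]
    simp [Set.inter_comm]
    rfl
  have hi2 : Integrable (fun ω => (pit x)⁻¹ * ((if Z ω = 1 then (1:ℝ) else 0) * f ω))
      (P.restrict A) := hind.const_mul _
  have hi3 : Integrable (fun ω => (pit x)⁻¹ * m x * (if Z ω = 1 then (1:ℝ) else 0))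
      (P.restrict A) := hind1.const_mul _
  have hi23 : Integrable (fun ω => (pit x)⁻¹ * ((if Z ω = 1 then (1:ℝ) else 0) * f ω)
      - (pit x)⁻¹ * m x * (if Z ω = 1 then (1:ℝ) else 0)) (P.restrict A) := hi2.sub hi3
  rw [integral_add hi23 (integrable_const _), integral_sub hi2 hi3,
      integral_const_mul, integral_const_mul, hI1, integral_const]
  simp only [smul_eq_mul, Measure.real, Measure.restrict_apply_univ]
  ring

/-- Proportionality of plug-in augmented scores under a correct outcome model. -/
theorem plug_in_scores_proportionality
    {Ω : Type*} [MeasurableSpace Ω] (P : Measure Ω) [IsProbabilityMeasure P]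
    {d : ℕ} (X : Ω → Fin d → ℝ) (Y Z S : Ω → ℝ)
    (hXm : Measurable X) (hYm : Measurable Y) (hZm : Measurable Z) (hSm : Measurable S)
    (hZ01 : ∀ ω, Z ω = 0 ∨ Z ω = 1) (hS01 : ∀ ω, S ω = 0 ∨ S ω = 1)
    (hYi : Integrable Y P)
    (pit pt1 : (Fin d → ℝ) → ℝ)
    (hpitm : Measurable pit) (hpt1m : Measurable pt1)
    (hpitr : ∀ x, 0 < pit x ∧ pit x < 1) :
    ∀ x : Fin d → ℝ,
      P {ω | X ω = x} ≠ 0 →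
      (∀ z : ℝ, z = 0 ∨ z = 1 → P {ω | Z ω = z ∧ X ω = x} ≠ 0) →
      (∀ z s : ℝ, (z = 0 ∨ z = 1) → (s = 0 ∨ s = 1) →
        P {ω | Z ω = z ∧ S ω = s ∧ X ω = x} ≠ 0) →
      0 < piX P X Z x → piX P X Z x < 1 →
      (condMeanOn P {ω | X ω = x}
            (psiT1 X Z pit (fun ω => Y ω * (1 - S ω))
              (fun x' => muZS P X Z S Y 1 0 x' * (1 - pt1 x')))
          = muZS P X Z S Y 1 0 x
              * condMeanOn P {ω | X ω = x}
                  (psiT1 X Z pit (fun ω => 1 - S ω) (fun x' => 1 - pt1 x'))) ∧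
      (condMeanOn P {ω | X ω = x}
            (psiT1 X Z pit (fun ω => 1 - S ω) (fun x' => 1 - pt1 x'))
          = piX P X Z x / pit x * (pt1 x - pZs P X Z S 1 x) + 1 - pt1 x) := by
  intro x hAx hZx hZSx hπpos hπlt
  have hAm : MeasurableSet {ω | X ω = x} := hXm (measurableSet_singleton x)
  have hB1m : MeasurableSet {ω | Z ω = 1} := hZm (measurableSet_singleton 1)
  have hS0m : MeasurableSet {ω | S ω = 0} := hSm (measurableSet_singleton 0)
  have hS1m : MeasurableSet {ω | S ω = 1} := hSm (measurableSet_singleton 1)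
  set A := {ω | X ω = x} with hA
  set B := ({ω | Z ω = 1} ∩ {ω | S ω = 0} : Set Ω) with hB
  have hBm : MeasurableSet B := hB1m.inter hS0m
  -- set identities
  have hE1 : ({ω | Z ω = 1} ∩ A : Set Ω) = {ω | Z ω = 1 ∧ X ω = x} := rfl
  have hE10 : (A ∩ B : Set Ω) = {ω | Z ω = 1 ∧ S ω = 0 ∧ X ω = x} := by
    ext ω; simp only [hA, hB, Set.mem_inter_iff, Set.mem_setOf_eq]; tauto
  have hE11 : ({ω | S ω = 1} ∩ {ω | Z ω = 1 ∧ X ω = x} : Set Ω)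
      = {ω | Z ω = 1 ∧ S ω = 1 ∧ X ω = x} := by
    ext ω; simp only [Set.mem_inter_iff, Set.mem_setOf_eq]; tauto
  have hsplit : ({ω | Z ω = 1 ∧ X ω = x} : Set Ω)
      = {ω | Z ω = 1 ∧ S ω = 0 ∧ X ω = x} ∪ {ω | Z ω = 1 ∧ S ω = 1 ∧ X ω = x} := by
    ext ω
    simp only [Set.mem_union, Set.mem_setOf_eq]
    rcases hS01 ω with hs | hs <;> simp [hs] <;> tauto
  have hE10m : MeasurableSet ({ω | Z ω = 1 ∧ S ω = 0 ∧ X ω = x} : Set Ω) := by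
    have : ({ω | Z ω = 1 ∧ S ω = 0 ∧ X ω = x} : Set Ω)
        = {ω | Z ω = 1} ∩ ({ω | S ω = 0} ∩ A) := rfl
    rw [this]; exact hB1m.inter (hS0m.inter hAm)
  have hE11m : MeasurableSet ({ω | Z ω = 1 ∧ S ω = 1 ∧ X ω = x} : Set Ω) := by
    have : ({ω | Z ω = 1 ∧ S ω = 1 ∧ X ω = x} : Set Ω)
        = {ω | Z ω = 1} ∩ ({ω | S ω = 1} ∩ A) := rfl
    rw [this]; exact hB1m.inter (hS1m.inter hAm)
  have hdisj : Disjoint ({ω | Z ω = 1 ∧ S ω = 0 ∧ X ω = x} : Set Ω)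
      {ω | Z ω = 1 ∧ S ω = 1 ∧ X ω = x} := by
    rw [Set.disjoint_left]
    rintro ω ⟨_, h0, _⟩ ⟨_, h1, _⟩
    rw [h0] at h1
    norm_num at h1
  -- real constants
  set a := (P A).toReal with ha_def
  set P1 := (P ({ω | Z ω = 1} ∩ A)).toReal with hP1_def
  set Q := (P {ω | Z ω = 1 ∧ S ω = 0 ∧ X ω = x}).toReal with hQ_def
  set R := (P {ω | Z ω = 1 ∧ S ω = 1 ∧ X ω = x}).toReal with hR_def
  have ha : a ≠ 0 := ENNReal.toReal_ne_zero.mpr ⟨hAx, measure_ne_top P A⟩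
  have hP1 : P1 ≠ 0 := by
    rw [hP1_def, hE1]
    exact ENNReal.toReal_ne_zero.mpr ⟨hZx 1 (Or.inr rfl), measure_ne_top P _⟩
  have hQne : Q ≠ 0 :=
    ENNReal.toReal_ne_zero.mpr ⟨hZSx 1 0 (Or.inr rfl) (Or.inl rfl), measure_ne_top P _⟩
  have hpit : pit x ≠ 0 := (hpitr x).1.ne'
  have hQR : P1 = Q + R := by
    rw [hP1_def, hQ_def, hR_def, hE1, hsplit, measure_union hdisj hE11m,
      ENNReal.toReal_add (measure_ne_top P _) (measure_ne_top P _)]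
  -- pointwise identities and integrals
  have hfun1 : (fun ω => (if Z ω = 1 then (1:ℝ) else 0) * (1 - S ω))
      = Set.indicator B (fun _ => 1) := by
    funext ω
    rcases hZ01 ω with hz | hz <;> rcases hS01 ω with hs | hs <;>
      simp [Set.indicator_apply, hB, Set.mem_inter_iff, Set.mem_setOf_eq, hz, hs] <;>
      norm_num
  have hfunY : (fun ω => (if Z ω = 1 then (1:ℝ) else 0) * (Y ω * (1 - S ω)))
      = Set.indicator B Y := by
    funext ω
    rcases hZ01 ω with hz | hz <;> rcases hS01 ω with hs | hs <;>
      simp [Set.indicator_apply, hB, Set.mem_inter_iff, Set.mem_setOf_eq, hz, hs] <;>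
      norm_num
  have hint1 : Integrable (fun ω => (if Z ω = 1 then (1:ℝ) else 0) * (1 - S ω))
      (P.restrict A) := by
    rw [hfun1]; exact ((integrable_const (1:ℝ)).indicator hBm).restrict
  have hintY : Integrable (fun ω => (if Z ω = 1 then (1:ℝ) else 0) * (Y ω * (1 - S ω)))
      (P.restrict A) := by
    rw [hfunY]; exact (hYi.indicator hBm).restrict
  have hIf1 : ∫ ω in A, (if Z ω = 1 then (1:ℝ) else 0) * (1 - S ω) ∂P = Q := by
    rw [hfun1, setIntegral_indicator hBm, hE10, hQ_def]
    simp
    rfl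
  have hμ : muZS P X Z S Y 1 0 x
      = (∫ ω in {ω | Z ω = 1 ∧ S ω = 0 ∧ X ω = x}, Y ω ∂P) / Q := rfl
  have hIfY : ∫ ω in A, (if Z ω = 1 then (1:ℝ) else 0) * (Y ω * (1 - S ω)) ∂P
      = muZS P X Z S Y 1 0 x * Q := by
    rw [hfunY, setIntegral_indicator hBm, hE10, hμ, div_mul_cancel₀ _ hQne]
  -- apply the auxiliary lemma
  have h2 := setIntegral_psiT1 P X Z pit (fun ω => 1 - S ω) (fun x' => 1 - pt1 x') x
    hAm hB1m hint1
  have h1 := setIntegral_psiT1 P X Z pit (fun ω => Y ω * (1 - S ω))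
    (fun x' => muZS P X Z S Y 1 0 x' * (1 - pt1 x')) x hAm hB1m hintY
  rw [hIf1] at h2
  rw [hIfY] at h1
  have hc2 : condMeanOn P A (psiT1 X Z pit (fun ω => 1 - S ω) (fun x' => 1 - pt1 x'))
      = ((pit x)⁻¹ * (Q - (1 - pt1 x) * P1) + (1 - pt1 x) * a) / a := by
    rw [condMeanOn, h2]
  have hc1 : condMeanOn P A (psiT1 X Z pit (fun ω => Y ω * (1 - S ω))
        (fun x' => muZS P X Z S Y 1 0 x' * (1 - pt1 x')))
      = ((pit x)⁻¹ * (muZS P X Z S Y 1 0 x * Q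
            - muZS P X Z S Y 1 0 x * (1 - pt1 x) * P1)
          + muZS P X Z S Y 1 0 x * (1 - pt1 x) * a) / a := by
    rw [condMeanOn, h1]
  have hpi : piX P X Z x = P1 / a := rfl
  have hp1 : pZs P X Z S 1 x = R / P1 := by
    rw [pZs, condProbOn, hE11, ← hE1]
  constructor
  · rw [hc1, hc2]
    ring
  · rw [hc2, hpi, hp1, hQR]
    have hQR0 : Q + R ≠ 0 := by rw [← hQR]; exact hP1
    field_simp
    ring
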